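/- Let c(x,y) = e^{x₁+y₁}cos(x₂-y₂) + e^{2x₁}/2 + e^{2y₁}/2. Any Borel probability measure γ on ℝ² × ℝ² supported on the set M = {(x,y) : y₁ = x₁, y₂ - x₂ ∈ {π, 3π, 5π}} is optimal for the Kantorovich problem between its own marginals. -/

import Mathlib

open MeasureTheory

/-- The cost `c(x,y) = e^{x₁+y₁} cos(x₂-y₂) + e^{2x₁}/2 + e^{2y₁}/2` on `ℝ² × ℝ²`. -/
noncomputable def cylCost (x y : ℝ × ℝ) : ℝ :=
  Real.exp (x.1 + y.1) * Real.cos (x.2 - y.2) + Real.exp (2 * x.1) / 2 + Real.exp (2 * y.1) / 2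

/-- The union of the three graphs `y₁ = x₁`, `y₂ - x₂ ∈ {π, 3π, 5π}`. -/
def threeGraphs : Set ((ℝ × ℝ) × (ℝ × ℝ)) :=
  {p | p.2.1 = p.1.1 ∧
    (p.2.2 - p.1.2 = Real.pi ∨ p.2.2 - p.1.2 = 3 * Real.pi ∨ p.2.2 - p.1.2 = 5 * Real.pi)}

lemma cylCost_nonneg (x y : ℝ × ℝ) : 0 ≤ cylCost x y := by
  unfold cylCost
  have h1 : Real.cos (x.2 - y.2) ≥ -1 := Real.neg_one_le_cos _
  have h2 : Real.exp (x.1 + y.1) > 0 := Real.exp_pos _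
  have h3 : Real.exp (x.1 + y.1) = Real.exp x.1 * Real.exp y.1 := Real.exp_add _ _
  have h4 : Real.exp (2 * x.1) = Real.exp x.1 * Real.exp x.1 := by
    rw [two_mul, Real.exp_add]
  have h5 : Real.exp (2 * y.1) = Real.exp y.1 * Real.exp y.1 := by
    rw [two_mul, Real.exp_add]
  nlinarith [sq_nonneg (Real.exp x.1 - Real.exp y.1), Real.exp_pos x.1, Real.exp_pos y.1]

lemma cylCost_zero_on {p : (ℝ × ℝ) × (ℝ × ℝ)} (hp : p ∈ threeGraphs) :
    cylCost p.1 p.2 = 0 := by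
  obtain ⟨h1, h2⟩ := hp
  have hcos : Real.cos (p.1.2 - p.2.2) = -1 := by
    have : Real.cos (p.1.2 - p.2.2) = Real.cos (p.2.2 - p.1.2) := by
      rw [← Real.cos_neg]; ring_nf
    rw [this]
    rcases h2 with h | h | h <;> rw [h]
    · exact Real.cos_pi
    · rw [show (3:ℝ) * Real.pi = Real.pi + 2 * Real.pi by ring, Real.cos_add_two_pi,
        Real.cos_pi]
    · rw [show (5:ℝ) * Real.pi = Real.pi + 2 * Real.pi + 2 * Real.pi by ring,
        Real.cos_add_two_pi, Real.cos_add_two_pi, Real.cos_pi]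
  unfold cylCost
  rw [hcos, h1]
  ring

lemma threeGraphs_measurable : MeasurableSet threeGraphs := by
  unfold threeGraphs
  apply MeasurableSet.inter
  · exact measurableSet_eq_fun (by fun_prop) (by fun_prop)
  · apply MeasurableSet.union
    · exact measurableSet_eq_fun (by fun_prop) measurable_const
    apply MeasurableSet.union
    · exact measurableSet_eq_fun (by fun_prop) measurable_const
    · exact measurableSet_eq_fun (by fun_prop) measurable_const

theorem measures_on_threeGraphs_optimal
    (γ : Measure ((ℝ × ℝ) × (ℝ × ℝ))) [IsProbabilityMeasure γ]
    (hγM : γ threeGraphs = 1) :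
    ∀ γ' : Measure ((ℝ × ℝ) × (ℝ × ℝ)), IsProbabilityMeasure γ' →
      γ'.map Prod.fst = γ.map Prod.fst → γ'.map Prod.snd = γ.map Prod.snd →
      ∫ p, cylCost p.1 p.2 ∂γ ≤ ∫ p, cylCost p.1 p.2 ∂γ' := by
  intro γ' _ _ _
  have hzero : ∫ p, cylCost p.1 p.2 ∂γ = 0 := by
    apply integral_eq_zero_of_ae
    have hc : γ threeGraphsᶜ = 0 := by
      rw [measure_compl threeGraphs_measurable (by simp), hγM, measure_univ]
      simp
    filter_upwards [(ae_iff.2 (by exact hc) : ∀ᵐ p ∂γ, p ∈ threeGraphs)] with p hp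
    exact cylCost_zero_on hp
  rw [hzero]
  exact integral_nonneg fun p => cylCost_nonneg p.1 p.2
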